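/- Under the change of variables x_1 ↦ x_1' x_2', x_2 ↦ x_1'/x_2', Γ_1^2 ↦ Γ_1' Γ_2', Γ_2^2 ↦ Γ_1' (Γ_2')^{−1}, the B_2 Macdonald-type difference operator E_1^{(B_2)} = Σ_{ε=±1} Σ_{i=1}^2 (1−t x_i^ε)/(1−x_i^ε) · Π_{j≠i} (1−t x_i^ε x_j)/(1−x_i^ε x_j) · (t x_i^ε − x_j)/(x_i^ε − x_j) · Γ_i^{2ε} is mapped to the C_2 operator E_2^{(C_2)} = Σ_{ε_1,ε_2=±1} Π_{i=1}^2 (1−t x_i^{2ε_i})/(1−x_i^{2ε_i}) · (1 − t x_1^{ε_1} x_2^{ε_2})/(1 − x_1^{ε_1} x_2^{ε_2}) · Γ_1^{ε_1} Γ_2^{ε_2}. -/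

import Mathlib

set_option synthInstance.maxHeartbeats 1000000
set_option maxHeartbeats 2000000

noncomputable section

open MvPolynomial

/-- The base field `ℚ(q,t)`. -/
abbrev R8 : Type := FractionRing (MvPolynomial (Fin 2) ℚ)

/-- The Macdonald parameter `q`. -/
def q8 : R8 := algebraMap (MvPolynomial (Fin 2) ℚ) R8 (X 0)

/-- The Macdonald parameter `t`. -/
def t8 : R8 := algebraMap (MvPolynomial (Fin 2) ℚ) R8 (X 1)

lemma q8_ne_zero : q8 ≠ 0 := by
  simpa only [q8, ne_eq] using
    (map_ne_zero_iff _ (IsFractionRing.injective (MvPolynomial (Fin 2) ℚ) R8)).mpr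
      (X_ne_zero (R := ℚ) 0)

/-- Polynomials in the two variables `x_1, x_2`. -/
abbrev P8 : Type := MvPolynomial (Fin 2) R8

/-- The field of rational functions in `x_1, x_2` over `ℚ(q,t)` (Laurent series coefficients). -/
abbrev K8 : Type := FractionRing P8

/-- The substitution `x_j ↦ q^{v_j} x_j` on polynomials. -/
def shiftHom8 (v : Fin 2 → ℤ) : P8 →ₐ[R8] P8 := aeval fun j => C (q8 ^ v j) * X j

/-- The substitution `x_j ↦ q^{v_j} x_j` as an algebra automorphism. -/
def shiftEquiv8 (v : Fin 2 → ℤ) : P8 ≃ₐ[R8] P8 :=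
  AlgEquiv.ofAlgHom (shiftHom8 v) (shiftHom8 (-v))
    (by
      apply MvPolynomial.algHom_ext
      intro j
      simp [shiftHom8]
      rw [← mul_assoc, ← C_mul, inv_mul_cancel₀ (zpow_ne_zero _ q8_ne_zero), C_1, one_mul])
    (by
      apply MvPolynomial.algHom_ext
      intro j
      simp [shiftHom8]
      rw [← mul_assoc, ← C_mul, mul_inv_cancel₀ (zpow_ne_zero _ q8_ne_zero), C_1, one_mul])

/-- The `q`-shift operator `Γ_1^{v_1} Γ_2^{v_2}` (`Γ_i : x_i ↦ q x_i`) on rational functions. -/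
def Γ8 (v : Fin 2 → ℤ) : K8 ≃+* K8 :=
  IsFractionRing.ringEquivOfRingEquiv (shiftEquiv8 v).toRingEquiv

/-- The variable `x_i` inside `K8`. -/
def x8 (i : Fin 2) : K8 := algebraMap P8 K8 (X i)

/-- `t` inside `K8`. -/
def tK8 : K8 := algebraMap P8 K8 (C t8)

/-- The first-order `B_2` Macdonald operator
`E_1^{(B_2)} = Σ_{ε=±1} Σ_{i=1,2} (1−t x_i^ε)/(1−x_i^ε) · (1−t x_i^ε x_j)/(1−x_i^ε x_j) ·
(t x_i^ε − x_j)/(x_i^ε − x_j) · Γ_i^{2ε}`  (`j ≠ i`). -/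
def EB : K8 → K8 := fun f =>
  ∑ e ∈ ({1, -1} : Finset ℤ),
    (((1 - tK8 * x8 0 ^ e) / (1 - x8 0 ^ e)) *
        ((1 - tK8 * (x8 0 ^ e * x8 1)) / (1 - x8 0 ^ e * x8 1)) *
        ((tK8 * x8 0 ^ e - x8 1) / (x8 0 ^ e - x8 1)) * Γ8 ![2 * e, 0] f +
      ((1 - tK8 * x8 1 ^ e) / (1 - x8 1 ^ e)) *
        ((1 - tK8 * (x8 1 ^ e * x8 0)) / (1 - x8 1 ^ e * x8 0)) *
        ((tK8 * x8 1 ^ e - x8 0) / (x8 1 ^ e - x8 0)) * Γ8 ![0, 2 * e] f)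

/-- The `C_2` Macdonald operator
`E_2^{(C_2)} = Σ_{ε_1,ε_2=±1} Π_i (1−t x_i^{2ε_i})/(1−x_i^{2ε_i}) ·
(1−t x_1^{ε_1}x_2^{ε_2})/(1−x_1^{ε_1}x_2^{ε_2}) · Γ_1^{ε_1} Γ_2^{ε_2}`. -/
def EC : K8 → K8 := fun f =>
  ∑ e1 ∈ ({1, -1} : Finset ℤ), ∑ e2 ∈ ({1, -1} : Finset ℤ),
    ((1 - tK8 * x8 0 ^ (2 * e1)) / (1 - x8 0 ^ (2 * e1))) *
      ((1 - tK8 * x8 1 ^ (2 * e2)) / (1 - x8 1 ^ (2 * e2))) *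
      ((1 - tK8 * (x8 0 ^ e1 * x8 1 ^ e2)) / (1 - x8 0 ^ e1 * x8 1 ^ e2)) *
      Γ8 ![e1, e2] f

lemma evalNe8 (g : Fin 2 → R8) (p : P8) (h : MvPolynomial.eval g p ≠ 0) :
    algebraMap P8 K8 p ≠ 0 := by
  intro h0
  exact h (by rw [(map_eq_zero_iff _ (IsFractionRing.injective P8 K8)).mp h0]; simp)

lemma x8_ne (i : Fin 2) : x8 i ≠ 0 := evalNe8 (fun _ => 1) (X i) (by simp)

lemma h1ab8 : (1:K8) - x8 0 * x8 1 ≠ 0 := by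
  have := evalNe8 (fun _ => 0) (1 - X 0 * X 1) (by simp)
  rw [map_sub, map_mul, map_one] at this; exact this

lemma hamb8 : x8 0 - x8 1 ≠ 0 := by
  have := evalNe8 ![1, 0] (X 0 - X 1) (by simp)
  rw [map_sub] at this; exact this

lemma h1a28 : (1:K8) - x8 0 * x8 0 ≠ 0 := by
  have := evalNe8 (fun _ => 0) (1 - X 0 * X 0) (by simp)
  rw [map_sub, map_mul, map_one] at this; exact this

lemma h1b28 : (1:K8) - x8 1 * x8 1 ≠ 0 := by
  have := evalNe8 (fun _ => 0) (1 - X 1 * X 1) (by simp)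
  rw [map_sub, map_mul, map_one] at this; exact this

lemma hn13 : x8 0 * x8 0 - 1 ≠ 0 := by intro h; exact h1a28 (by linear_combination -h)
lemma hn14 : x8 1 * x8 1 - 1 ≠ 0 := by intro h; exact h1b28 (by linear_combination -h)
lemma hn15 : x8 0 * x8 1 - 1 ≠ 0 := by intro h; exact h1ab8 (by linear_combination -h)
lemma hnba : x8 1 - x8 0 ≠ 0 := sub_ne_zero.mpr (sub_ne_zero.mp hamb8).symm

lemma coef1m :
    (1 - tK8 * (x8 0 / x8 1)) / (1 - x8 0 / x8 1) *
      ((1 - tK8 * (x8 0 / x8 1 * (x8 0 * x8 1))) / (1 - x8 0 / x8 1 * (x8 0 * x8 1))) *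
      ((tK8 * (x8 0 / x8 1) - x8 0 * x8 1) / (x8 0 / x8 1 - x8 0 * x8 1)) =
    (1 - tK8 * (x8 0 * x8 0)) / (1 - x8 0 * x8 0) *
      ((1 - tK8 * ((x8 1)⁻¹ * (x8 1)⁻¹)) / (1 - (x8 1)⁻¹ * (x8 1)⁻¹)) *
      ((1 - tK8 * (x8 0 * (x8 1)⁻¹)) / (1 - x8 0 * (x8 1)⁻¹)) := by
  have h7 : x8 1 - x8 0 * (x8 0 * x8 1) ≠ 0 := by
    rw [show x8 1 - x8 0 * (x8 0 * x8 1) = x8 1 * (1 - x8 0 * x8 0) from by ring]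
    exact mul_ne_zero (x8_ne 1) h1a28
  have h8 : x8 0 - x8 1 * (x8 0 * x8 1) ≠ 0 := by
    rw [show x8 0 - x8 1 * (x8 0 * x8 1) = x8 0 * (1 - x8 1 * x8 1) from by ring]
    exact mul_ne_zero (x8_ne 0) h1b28
  field_simp [x8_ne 0, x8_ne 1, h1ab8, h1a28, h1b28, hamb8, hnba, hn13, hn14, hn15, h7, h8]

  rw [div_eq_div_iff (by simp [pow_two, x8_ne 0, x8_ne 1, h1ab8, h1a28, h1b28, hamb8, hnba, hn13, hn14, hn15]) (by simp [pow_two, x8_ne 0, x8_ne 1, h1ab8, h1a28, h1b28, hamb8, hnba, hn13, hn14, hn15])]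
  ring

lemma coefmm :
    (1 - tK8 * ((x8 1)⁻¹ * (x8 0)⁻¹)) / (1 - (x8 1)⁻¹ * (x8 0)⁻¹) *
      ((1 - tK8 * ((x8 1)⁻¹ * (x8 0)⁻¹ * (x8 0 / x8 1))) / (1 - (x8 1)⁻¹ * (x8 0)⁻¹ * (x8 0 / x8 1))) *
      ((tK8 * ((x8 1)⁻¹ * (x8 0)⁻¹) - x8 0 / x8 1) / ((x8 1)⁻¹ * (x8 0)⁻¹ - x8 0 / x8 1)) =
    (1 - tK8 * ((x8 0)⁻¹ * (x8 0)⁻¹)) / (1 - (x8 0)⁻¹ * (x8 0)⁻¹) *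
      ((1 - tK8 * ((x8 1)⁻¹ * (x8 1)⁻¹)) / (1 - (x8 1)⁻¹ * (x8 1)⁻¹)) *
      ((1 - tK8 * ((x8 0)⁻¹ * (x8 1)⁻¹)) / (1 - (x8 0)⁻¹ * (x8 1)⁻¹)) := by
  have hn9 : x8 1 * x8 0 - 1 ≠ 0 := by intro h; exact h1ab8 (by linear_combination -h)
  have h10 : x8 1 * x8 0 * x8 1 - x8 0 ≠ 0 := by
    rw [show x8 1 * x8 0 * x8 1 - x8 0 = x8 0 * (x8 1 * x8 1 - 1) from by ring]
    exact mul_ne_zero (x8_ne 0) hn14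
  have h11 : x8 1 - x8 1 * x8 0 * x8 0 ≠ 0 := by
    rw [show x8 1 - x8 1 * x8 0 * x8 0 = x8 1 * (1 - x8 0 * x8 0) from by ring]
    exact mul_ne_zero (x8_ne 1) h1a28
  field_simp [x8_ne 0, x8_ne 1, h1ab8, h1a28, h1b28, hamb8, hnba, hn13, hn14, hn15, hn9, h10, h11]

  rw [div_eq_div_iff (by simp [pow_two, x8_ne 0, x8_ne 1, h1ab8, h1a28, h1b28, hamb8, hnba, hn13, hn14, hn15]) (by simp [pow_two, x8_ne 0, x8_ne 1, h1ab8, h1a28, h1b28, hamb8, hnba, hn13, hn14, hn15])]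
  ring

lemma coefm1 :
    (1 - tK8 * (x8 1 / x8 0)) / (1 - x8 1 / x8 0) *
      ((1 - tK8 * (x8 1 / x8 0 * (x8 0 * x8 1))) / (1 - x8 1 / x8 0 * (x8 0 * x8 1))) *
      ((tK8 * (x8 1 / x8 0) - x8 0 * x8 1) / (x8 1 / x8 0 - x8 0 * x8 1)) =
    (1 - tK8 * ((x8 0)⁻¹ * (x8 0)⁻¹)) / (1 - (x8 0)⁻¹ * (x8 0)⁻¹) *
      ((1 - tK8 * (x8 1 * x8 1)) / (1 - x8 1 * x8 1)) *
      ((1 - tK8 * ((x8 0)⁻¹ * x8 1)) / (1 - (x8 0)⁻¹ * x8 1)) := by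
  have h12 : x8 0 - x8 1 * (x8 0 * x8 1) ≠ 0 := by
    rw [show x8 0 - x8 1 * (x8 0 * x8 1) = x8 0 * (1 - x8 1 * x8 1) from by ring]
    exact mul_ne_zero (x8_ne 0) h1b28
  have h13 : x8 1 - x8 0 * (x8 0 * x8 1) ≠ 0 := by
    rw [show x8 1 - x8 0 * (x8 0 * x8 1) = x8 1 * (1 - x8 0 * x8 0) from by ring]
    exact mul_ne_zero (x8_ne 1) h1a28
  field_simp [x8_ne 0, x8_ne 1, h1ab8, h1a28, h1b28, hamb8, hnba, hn13, hn14, hn15, h12, h13]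

  rw [div_eq_div_iff (by simp [pow_two, x8_ne 0, x8_ne 1, h1ab8, h1a28, h1b28, hamb8, hnba, hn13, hn14, hn15]) (by simp [pow_two, x8_ne 0, x8_ne 1, h1ab8, h1a28, h1b28, hamb8, hnba, hn13, hn14, hn15])]
  ring

lemma coef11 :
    (1 - tK8 * (x8 0 * x8 1)) / (1 - x8 0 * x8 1) *
      ((1 - tK8 * (x8 0 * x8 1 * (x8 0 / x8 1))) / (1 - x8 0 * x8 1 * (x8 0 / x8 1))) *
      ((tK8 * (x8 0 * x8 1) - x8 0 / x8 1) / (x8 0 * x8 1 - x8 0 / x8 1)) =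
    (1 - tK8 * (x8 0 * x8 0)) / (1 - x8 0 * x8 0) *
      ((1 - tK8 * (x8 1 * x8 1)) / (1 - x8 1 * x8 1)) *
      ((1 - tK8 * (x8 0 * x8 1)) / (1 - x8 0 * x8 1)) := by
  have h5 : x8 1 - x8 0 * x8 1 * x8 0 ≠ 0 := by
    rw [show x8 1 - x8 0 * x8 1 * x8 0 = x8 1 * (1 - x8 0 * x8 0) from by ring]
    exact mul_ne_zero (x8_ne 1) h1a28
  have h6 : x8 0 * x8 1 * x8 1 - x8 0 ≠ 0 := by
    rw [show x8 0 * x8 1 * x8 1 - x8 0 = x8 0 * (x8 1 * x8 1 - 1) from by ring]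
    exact mul_ne_zero (x8_ne 0) hn14
  field_simp [x8_ne 0, x8_ne 1, h1ab8, h1a28, h1b28, h5, h6]

  rw [div_eq_div_iff (by simp [pow_two, x8_ne 0, x8_ne 1, h1ab8, h1a28, h1b28, hamb8, hnba, hn13, hn14, hn15]) (by simp [pow_two, x8_ne 0, x8_ne 1, h1ab8, h1a28, h1b28, hamb8, hnba, hn13, hn14, hn15])]
  ring

/-- under the change of variables `x_1 ↦ x_1' x_2'`, `x_2 ↦ x_1'/x_2'`,
`Γ_1² ↦ Γ_1' Γ_2'`, `Γ_2² ↦ Γ_1' (Γ_2')^{−1}` (any substitution homomorphism `φ` fixing `q,t`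
and realizing these assignments), the `B_2` Macdonald operator `E_1^{(B_2)}` is mapped to the
`C_2` Macdonald operator `E_2^{(C_2)}`, i.e. `φ ∘ E_1^{(B_2)} = E_2^{(C_2)} ∘ φ`. -/
theorem stmt8 (φ : K8 →+* K8)
    (hconst : ∀ r : R8, φ (algebraMap P8 K8 (C r)) = algebraMap P8 K8 (C r))
    (hx1 : φ (x8 0) = x8 0 * x8 1)
    (hx2 : φ (x8 1) = x8 0 / x8 1)
    (hG1 : ∀ (e : ℤ) (f : K8), φ (Γ8 ![2 * e, 0] f) = Γ8 ![e, e] (φ f))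
    (hG2 : ∀ (e : ℤ) (f : K8), φ (Γ8 ![0, 2 * e] f) = Γ8 ![e, -e] (φ f)) :
    ∀ f : K8, φ (EB f) = EC (φ f) := by
  intro f
  have ht : φ tK8 = tK8 := hconst t8
  simp only [EB, EC, Finset.sum_insert (by decide : (1:ℤ) ∉ ({-1} : Finset ℤ)),
    Finset.sum_singleton, map_add, map_mul, map_div₀, map_sub, map_one, map_zpow₀,
    hx1, hx2, ht, hG1, hG2, neg_neg]
  norm_num [zpow_one, zpow_neg_one, zpow_two, zpow_neg]
  rw [coef11, coef1m, coefmm, coefm1]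
  ring
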